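/- Let r ≥ 3 and let S ⊆ Q̄_r^n, where Q̄_r^n is identified with [r]^n via the bijection between the hyperedges of Q̄_r and [r]. If there exists a vector of homomorphisms of Q̄_r that is good for S, then S contains a combinatorial line. -/
import Mathlib


/-- The question set `Q̄_r ⊆ {0,1}^r`: tuples with exactly one coordinate equal to 1. -/
def QbarR (r : ℕ) : Finset (Fin r → Bool) :=
  Finset.univ.filter fun q => (Finset.univ.filter fun j => q j = true).card = 1
/-- The point of a combinatorial pattern `b` (wildcard = `none`) at `q`. -/
def patternLine {r n : ℕ} (b : Fin n → Option (Fin r)) (q : Fin r) : Fin n → Fin r :=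
  fun i => (b i).getD q

/-- `S ⊆ [r]^n` contains a combinatorial line: there is a pattern `b` (with at least one
wildcard) all of whose substitution instances lie in `S`. -/
def HasCombLine {r n : ℕ} (S : Set (Fin n → Fin r)) : Prop :=
  ∃ b : Fin n → Option (Fin r), (∃ i, b i = none) ∧ ∀ q : Fin r, patternLine b q ∈ S

lemma mem_QbarR {r : ℕ} (q : Fin r → Bool) :
    q ∈ QbarR r ↔ (Finset.univ.filter fun j => q j = true).card = 1 := by
  simp [QbarR]

lemma e_mem {r : ℕ} (a : Fin r) : (fun j => decide (j = a)) ∈ QbarR r := by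
  rw [mem_QbarR]
  have : (Finset.univ.filter fun j : Fin r => decide (j = a) = true) = {a} := by
    ext j; simp
  rw [this, Finset.card_singleton]

lemma dich {r : ℕ} (hr : 3 ≤ r) (g : Fin r → Bool → Bool)
    (hg : ∀ a : Fin r, (Finset.univ.filter fun j => g j (decide (j = a)) = true).card = 1) :
    (∀ a j : Fin r, g j (decide (j = a)) = decide (j = a)) ∨
    ∃ c, ∀ a j : Fin r, g j (decide (j = a)) = decide (j = c) := by
  have hF : ∀ a : Fin r, ∃ x,
      (Finset.univ.filter fun j => g j (decide (j = a)) = true) = {x} :=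
    fun a => Finset.card_eq_one.mp (hg a)
  by_cases hc : ∃ c, g c false = true
  · obtain ⟨c, hcf⟩ := hc
    right
    -- only c maps false to true
    have hd : ∀ d : Fin r, d ≠ c → g d false = false := by
      intro d hdc
      by_contra hdf
      rw [Bool.not_eq_false] at hdf
      have hcard : ({c, d} : Finset (Fin r)).card < (Finset.univ : Finset (Fin r)).card := by
        have h1 := Finset.card_insert_le c ({d} : Finset (Fin r))
        simp only [Finset.card_singleton] at h1
        simp only [Finset.card_univ, Fintype.card_fin]
        omega
      have hss : ({c, d} : Finset (Fin r)) ⊂ Finset.univ :=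
        Finset.ssubset_univ_iff.mpr (by intro h; rw [h] at hcard; exact lt_irrefl _ hcard)
      obtain ⟨a, -, ha⟩ := Finset.exists_of_ssubset hss
      simp only [Finset.mem_insert, Finset.mem_singleton, not_or] at ha
      obtain ⟨x, hx⟩ := hF a
      have hcm : c ∈ (Finset.univ.filter fun j => g j (decide (j = a)) = true) := by
        simp only [Finset.mem_filter, Finset.mem_univ, true_and]
        have : decide (c = a) = false := by simp; exact fun h => ha.1 h.symm
        rw [this, hcf]
      have hdm : d ∈ (Finset.univ.filter fun j => g j (decide (j = a)) = true) := by
        simp only [Finset.mem_filter, Finset.mem_univ, true_and]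
        have : decide (d = a) = false := by simp; exact fun h => ha.2 h.symm
        rw [this, hdf]
      rw [hx, Finset.mem_singleton] at hcm hdm
      exact hdc (hdm.trans hcm.symm)
    -- g c true = true
    have hct : g c true = true := by
      obtain ⟨x, hx⟩ := hF c
      have hxm : x ∈ (Finset.univ.filter fun j => g j (decide (j = c)) = true) := by
        rw [hx]; exact Finset.mem_singleton_self x
      simp only [Finset.mem_filter, Finset.mem_univ, true_and] at hxm
      by_cases hxc : x = c
      · subst hxc; simpa using hxm
      · exfalso
        have : decide (x = c) = false := by simp [hxc]
        rw [this] at hxm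
        exact absurd hxm (by simp [hd x hxc])
    -- g a true = false for a ≠ c
    have hat : ∀ a : Fin r, a ≠ c → g a true = false := by
      intro a hac
      obtain ⟨x, hx⟩ := hF a
      have hcm : c ∈ (Finset.univ.filter fun j => g j (decide (j = a)) = true) := by
        simp only [Finset.mem_filter, Finset.mem_univ, true_and]
        have : decide (c = a) = false := by simp; exact fun h => hac h.symm
        rw [this, hcf]
      rw [hx, Finset.mem_singleton] at hcm
      by_contra hat'
      rw [Bool.not_eq_false] at hat'
      have ham : a ∈ (Finset.univ.filter fun j => g j (decide (j = a)) = true) := by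
        simp only [Finset.mem_filter, Finset.mem_univ, true_and]
        simpa using hat'
      rw [hx, Finset.mem_singleton] at ham
      exact hac (ham.trans hcm.symm)
    refine ⟨c, fun a j => ?_⟩
    by_cases hjc : j = c
    · subst hjc
      by_cases hja : j = a
      · subst hja; simp [hct]
      · simp only [decide_eq_decide]
        have : decide (j = a) = false := by simp [hja]
        rw [this, hcf]; simp
    · have hjc' : decide (j = c) = false := by simp [hjc]
      rw [hjc']
      by_cases hja : j = a
      · subst hja; simp [hat j hjc]
      · have : decide (j = a) = false := by simp [hja]
        rw [this, hd j hjc]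
  · left
    push_neg at hc
    have hcf : ∀ d : Fin r, g d false = false := fun d => Bool.not_eq_true _ |>.mp (hc d)
    have hat : ∀ a : Fin r, g a true = true := by
      intro a
      obtain ⟨x, hx⟩ := hF a
      have hxm : x ∈ (Finset.univ.filter fun j => g j (decide (j = a)) = true) := by
        rw [hx]; exact Finset.mem_singleton_self x
      simp only [Finset.mem_filter, Finset.mem_univ, true_and] at hxm
      by_cases hxa : x = a
      · subst hxa; simpa using hxm
      · exfalso
        have : decide (x = a) = false := by simp [hxa]
        rw [this] at hxm
        exact absurd hxm (by simp [hcf x])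
    intro a j
    by_cases hja : j = a
    · subst hja; simp [hat]
    · have : decide (j = a) = false := by simp [hja]
      rw [this, hcf]

/-- Let `r ≥ 3` and `S ⊆ [r]^n` (identifying the hyperedge of `Q̄_r` whose unique
`true`-coordinate is `a` with `a ∈ [r]`). If there is a vector `f = (f_1,…,f_n)` of
homomorphisms of `Q̄_r` that is good for `S` — i.e. each `f i` maps `Q̄_r` into `Q̄_r`,
some `f i` is the identity, and the image of every hyperedge of `Q̄_r` under `f`
(read back in `[r]^n`) lies in `S` — then `S` contains a combinatorial line. -/
theorem statement8 (r n : ℕ) (hr : 3 ≤ r) (S : Set (Fin n → Fin r))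
    (f : Fin n → ∀ _ : Fin r, Bool → Bool)
    (hhom : ∀ i, ∀ q ∈ QbarR r, (fun j => f i j (q j)) ∈ QbarR r)
    (hid : ∃ i, ∀ j, f i j = id)
    (hgood : ∀ q ∈ QbarR r, ∃ s ∈ S,
      ∀ i, (fun j => f i j (q j)) = fun j => decide (j = s i)) :
    HasCombLine S := by
  classical
  have hDich : ∀ i, (∀ a j : Fin r, f i j (decide (j = a)) = decide (j = a)) ∨
      ∃ c, ∀ a j : Fin r, f i j (decide (j = a)) = decide (j = c) := by
    intro i
    apply dich hr
    intro a
    have h := hhom i (fun j => decide (j = a)) (e_mem a)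
    rw [mem_QbarR] at h
    exact h
  set b : Fin n → Option (Fin r) := fun i =>
    if h : ∃ c, ∀ a j : Fin r, f i j (decide (j = a)) = decide (j = c)
    then some h.choose else none with hb
  refine ⟨b, ?_, ?_⟩
  · obtain ⟨i, hi⟩ := hid
    refine ⟨i, ?_⟩
    rw [hb]
    simp only
    rw [dif_neg]
    rintro ⟨c, hcs⟩
    -- pick a ≠ c
    have h2 : (1 : ℕ) < r := by omega
    have : Nontrivial (Fin r) := Fin.nontrivial_iff_two_le.mpr (by omega)
    obtain ⟨a, hac⟩ := exists_ne c
    have := hcs a a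
    rw [hi a] at this
    simp only [id_eq] at this
    simp only [decide_eq_decide] at this
    exact hac (this.mp trivial)
  · intro q
    obtain ⟨s, hsS, hs⟩ := hgood (fun j => decide (j = q)) (e_mem q)
    have hps : patternLine b q = s := by
      funext i
      have hsi : ∀ j, f i j (decide (j = q)) = decide (j = s i) := fun j => congrFun (hs i) j
      show (b i).getD q = s i
      rw [hb]
      simp only
      by_cases h : ∃ c, ∀ a j : Fin r, f i j (decide (j = a)) = decide (j = c)
      · rw [dif_pos h]
        have hspec := h.choose_spec q (s i)
        rw [hsi (s i)] at hspec
        simp only [decide_eq_decide] at hspec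
        simp [← hspec.mp trivial]
      · rw [dif_neg h]
        have hid' := (hDich i).resolve_right h
        have := hsi q
        rw [hid' q q] at this
        simp only [decide_eq_decide] at this
        simpa using this.mp trivial
    rw [hps]
    exact hsS
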